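/- Let r ∈ ℕ and let G be a connected graph whose binary cycle space is generated by cycles of length ≤ r. Let s and t be separations of G with r-tomic separators. Then s and t cross if and only if the induced r-local separations s_r and t_r cross. -/

import Mathlib

namespace LS

open SimpleGraph

variable {V : Type*}

/-- `(A, B)` is an (oriented) separation of `G`: the two sides cover `V`
and there is no edge between `A ∖ B` and `B ∖ A`. -/
def IsSep (G : SimpleGraph V) (A B : Set V) : Prop :=
  A ∪ B = Set.univ ∧ ∀ a ∈ A \ B, ∀ b ∈ B \ A, ¬G.Adj a b

/-- `(A,B) ≥ (C,D)` for oriented separations, i.e. `A ⊆ C` and `B ⊇ D`. -/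
def SepGE (s t : Set V × Set V) : Prop := s.1 ⊆ t.1 ∧ t.2 ⊆ s.2

/-- Two (unoriented) separations are nested if they have `≥`-comparable orientations. -/
def Nested (s t : Set V × Set V) : Prop :=
  SepGE s t ∨ SepGE s (t.2, t.1) ∨ SepGE (s.2, s.1) t ∨ SepGE (s.2, s.1) (t.2, t.1)

/-- Two separations cross if they are not nested. -/
def Crosses (s t : Set V × Set V) : Prop := ¬Nested s t

/-- The neighbourhood `N_G(K)` of a vertex set `K`. -/
def nbhdSet (G : SimpleGraph V) (K : Set V) : Set V :=
  {v | v ∉ K ∧ ∃ u ∈ K, G.Adj u v}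

/-- `K` is (the vertex set of) a connected component of the subgraph of `G` induced on `S`. -/
def IsCompOf (G : SimpleGraph V) (K S : Set V) : Prop :=
  K.Nonempty ∧ K ⊆ S ∧ (G.induce K).Connected ∧ ∀ a ∈ K, ∀ b ∈ S, G.Adj a b → b ∈ K

/-- `K` is a component of `G − X` that is tight at `X`, i.e. `N_G(K) = X`. -/
def TightCompAt (G : SimpleGraph V) (K X : Set V) : Prop :=
  IsCompOf G K Xᶜ ∧ nbhdSet G K = X

/-- A separation `{A,B}` is tight if `G − (A ∩ B)` has tight components
contained in `A` and in `B`, respectively. -/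
def TightSep (G : SimpleGraph V) (A B : Set V) : Prop :=
  (∃ K, TightCompAt G K (A ∩ B) ∧ K ⊆ A) ∧ ∃ K, TightCompAt G K (A ∩ B) ∧ K ⊆ B

/-- `X` is a tight separator: `G − X` has at least two components tight at `X`. -/
def TightSeparator (G : SimpleGraph V) (X : Set V) : Prop :=
  ∃ K₁ K₂, K₁ ≠ K₂ ∧ TightCompAt G K₁ X ∧ TightCompAt G K₂ X

/-- The set `E_G(S,T)` of edges of `G` with one end in `S` and the other in `T`. -/
def edgesBetween (G : SimpleGraph V) (S T : Set V) : Set (Sym2 V) :=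
  {e | ∃ u v, G.Adj u v ∧ e = s(u, v) ∧ u ∈ S ∧ v ∈ T}

/-- `∂X`: the set of edges of `G` with exactly one end in `X`. -/
def edgeBdry (G : SimpleGraph V) (X : Set V) : Set (Sym2 V) :=
  {e | ∃ u v, G.Adj u v ∧ e = s(u, v) ∧ u ∈ X ∧ v ∉ X}

/-- The separator of an oriented separation. -/
def tsSep (s : Set V × Set V) : Set V := s.1 ∩ s.2

/-- `p` lists the three distinct oriented separations of a ⊤-star. -/
def IsTStar (G : SimpleGraph V) (p : Fin 3 → Set V × Set V) : Prop :=
  Function.Injective p ∧ (∀ i, IsSep G (p i).1 (p i).2) ∧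
  (∀ i j, i ≠ j → Disjoint ((p i).1 \ (p i).2) ((p j).1 \ (p j).2)) ∧
  (⋃ i, ((p i).1 \ (p i).2)) = (⋃ i, tsSep (p i))ᶜ ∧
  ∀ i, ∀ v ∈ tsSep (p i), ∃ j, j ≠ i ∧ v ∈ tsSep (p j)

/-- The centre `Z` of a ⊤-star. -/
def tsCentre (p : Fin 3 → Set V × Set V) : Set V := ⋂ i, tsSep (p i)

/-- The `ij`-link `X_{ij}` of a ⊤-star. -/
def tsLink (p : Fin 3 → Set V × Set V) (i j : Fin 3) : Set V :=
  (tsSep (p i) ∩ tsSep (p j)) \ tsCentre p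

/-- The ⊤-star `p` is relevant with base `p 0`. -/
def RelevantTStar (G : SimpleGraph V) (p : Fin 3 → Set V × Set V) : Prop :=
  IsTStar G p ∧ TightSep G (p 0).1 (p 0).2 ∧
  ∀ x ∈ tsLink p 1 2, ∀ i : Fin 3, i ≠ 0 →
    (∃ y ∈ tsLink p 0 i, G.Adj x y) ∨
    ∃ y ∈ tsLink p 0 i ∪ tsCentre p, ∃ K, IsCompOf G K ((p i).1 \ (p i).2) ∧
      x ∈ nbhdSet G K ∧ y ∈ nbhdSet G K

/-- A bottleneck of order `k` in `G`, encoded as a set of oriented separations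
closed under reversal (representing a set of unoriented separations). -/
def IsBottleneck (G : SimpleGraph V) (k : ℕ) (β : Set (Set V × Set V)) : Prop :=
  β.Nonempty ∧ (∀ s ∈ β, (s.2, s.1) ∈ β) ∧
  (∀ s ∈ β, IsSep G s.1 s.2 ∧ TightSep G s.1 s.2 ∧ (s.1 ∩ s.2).encard = k) ∧
  ∀ p : Fin 3 → Set V × Set V, RelevantTStar G p →
    (∀ i, (tsSep (p i)).encard ≤ (k : ℕ∞)) → p 0 ∈ β → p 1 ∈ β ∨ p 2 ∈ β

/-! ### Tangles -/

/-- A tangle of order `ℓ` in `G`. -/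
def IsTangle (G : SimpleGraph V) (ℓ : ℕ) (τ : Set (Set V × Set V)) : Prop :=
  (∀ s ∈ τ, IsSep G s.1 s.2 ∧ (s.1 ∩ s.2).encard < (ℓ : ℕ∞)) ∧
  (∀ A B : Set V, IsSep G A B → (A ∩ B).encard < (ℓ : ℕ∞) → ((A, B) ∈ τ ∨ (B, A) ∈ τ)) ∧
  (∀ A B : Set V, (A, B) ∈ τ → (B, A) ∈ τ → A = B) ∧
  ∀ s₁ ∈ τ, ∀ s₂ ∈ τ, ∀ s₃ ∈ τ,
    ¬(s₁.1 ∪ s₂.1 ∪ s₃.1 = Set.univ ∧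
      ∀ u v : V, G.Adj u v →
        (u ∈ s₁.1 ∧ v ∈ s₁.1) ∨ (u ∈ s₂.1 ∧ v ∈ s₂.1) ∨ (u ∈ s₃.1 ∧ v ∈ s₃.1))

/-- The separation `{A,B}` distinguishes the tangles `τ` and `τ'`. -/
def DistinguishesT (τ τ' : Set (Set V × Set V)) (A B : Set V) : Prop :=
  ((A, B) ∈ τ ∧ (B, A) ∈ τ') ∨ ((B, A) ∈ τ ∧ (A, B) ∈ τ')

/-- The separation `{A,B}` distinguishes the vertex sets `Y` and `Z`. -/
def DistSets (Y Z A B : Set V) : Prop :=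
  (Y ⊆ A ∧ (Y ∩ (A \ B)).Nonempty ∧ Z ⊆ B ∧ (Z ∩ (B \ A)).Nonempty) ∨
  (Y ⊆ B ∧ (Y ∩ (B \ A)).Nonempty ∧ Z ⊆ A ∧ (Z ∩ (A \ B)).Nonempty)

/-! ### The construction of the nested sets `N^k(G)` -/

/-- `X^k`: the union of all `k`-bottlenecks in `G`. -/
def Xk (G : SimpleGraph V) (k : ℕ) : Set (Set V × Set V) :=
  {s | ∃ β, IsBottleneck G k β ∧ s ∈ β}

/-- `x^k(s)`: the number of separations in `X^k` that `s` crosses. -/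
noncomputable def xk (G : SimpleGraph V) (k : ℕ) (s : Set V × Set V) : ℕ :=
  {t ∈ Xk G k | Crosses s t}.ncard

/-- `N^k(G,β)` relative to a previously constructed set `M` of separations:
the elements of `β` nested with `M` that minimise `x^k` among those. -/
def NkOfBeta (G : SimpleGraph V) (M : Set (Set V × Set V)) (k : ℕ)
    (β : Set (Set V × Set V)) : Set (Set V × Set V) :=
  {s ∈ β | (∀ t ∈ M, Nested s t) ∧
    ∀ s' ∈ β, (∀ t ∈ M, Nested s' t) → xk G k s ≤ xk G k s'}

/-- `N^k(G)` relative to a previously constructed set `M`. -/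
def NkStep (G : SimpleGraph V) (M : Set (Set V × Set V)) (k : ℕ) :
    Set (Set V × Set V) :=
  {s | ∃ β, IsBottleneck G k β ∧ s ∈ NkOfBeta G M k β}

/-- `N^{<k}(G) = ⋃_{j<k} N^j(G)`. -/
noncomputable def Nlt (G : SimpleGraph V) : ℕ → Set (Set V × Set V)
  | 0 => ∅
  | k + 1 => Nlt G k ∪ NkStep G (Nlt G k) k

/-- `N^k(G)`. -/
noncomputable def Nk (G : SimpleGraph V) (k : ℕ) : Set (Set V × Set V) :=
  NkStep G (Nlt G k) k

/-- `N(G) = ⋃_k N^k(G)`. -/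
noncomputable def NSet (G : SimpleGraph V) : Set (Set V × Set V) :=
  ⋃ k, Nk G k

/-! ### Walks, local components and local separations -/

/-- An `X`-walk: a walk having precisely its first and last vertex in `X`. -/
def IsXWalk (G : SimpleGraph V) (X : Set V) {u v : V} (W : G.Walk u v) : Prop :=
  u ∈ X ∧ v ∈ X ∧ ∀ w ∈ W.support, w ∈ X → w = u ∨ w = v

/-- An `r`-local `X`-walk: an `X`-walk contained in a cycle of length `≤ r`,
or an `X`-walk consisting of a single `X`-edge. -/
def IsLocalXWalk (G : SimpleGraph V) (r : ℕ) (X : Set V) {u v : V} (W : G.Walk u v) :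
    Prop :=
  IsXWalk G X W ∧
  ((∃ (a : V) (C : G.Walk a a), C.IsCycle ∧ C.length ≤ r ∧ ∀ e ∈ W.edges, e ∈ C.edges) ∨
    W.length = 1)

/-- An `r`-local `X`-path. -/
def IsLocalXPath (G : SimpleGraph V) (r : ℕ) (X : Set V) {u v : V} (W : G.Walk u v) :
    Prop :=
  IsLocalXWalk G r X W ∧ W.IsPath

/-- Walks that are concatenations of `r`-local `X`-paths. -/
inductive ConcatLocalPaths (G : SimpleGraph V) (r : ℕ) (X : Set V) :
    ∀ {u v : V}, G.Walk u v → Prop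
  | single {u v : V} (W : G.Walk u v) (h : IsLocalXPath G r X W) :
      ConcatLocalPaths G r X W
  | comp {u v w : V} (W₁ : G.Walk u v) (W₂ : G.Walk v w)
      (h₁ : IsLocalXPath G r X W₁) (h₂ : ConcatLocalPaths G r X W₂) :
      ConcatLocalPaths G r X (W₁.append W₂)

/-- `W ∈ W_r(X)`: `W` is a concatenation of `r`-local `X`-paths repeating no vertex of `X`. -/
def MemWr (G : SimpleGraph V) (r : ℕ) (X : Set V) {u v : V} (W : G.Walk u v) : Prop :=
  ConcatLocalPaths G r X W ∧ ∀ x ∈ X, ¬W.support.Duplicate x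

/-- `X` is `r`-tomic: any two of its vertices are joined by a walk in `W_r(X)`. -/
def Rtomic (G : SimpleGraph V) (r : ℕ) (X : Set V) : Prop :=
  ∀ x ∈ X, ∀ y ∈ X, x ≠ y → ∃ W : G.Walk x y, MemWr G r X W

/-- One step of the relation generating the `r`-local components at `X`:
`e = f`, or `e` and `f` are the first and last edges of an `r`-local `X`-walk
(both required to lie in `∂X`). -/
def LocalEdgeStep (G : SimpleGraph V) (r : ℕ) (X : Set V) (e f : Sym2 V) : Prop :=
  e ∈ edgeBdry G X ∧ f ∈ edgeBdry G X ∧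
  (e = f ∨ ∃ (u v : V) (W : G.Walk u v), IsLocalXWalk G r X W ∧
      W.edges.head? = some e ∧ W.edges.getLast? = some f)

/-- `F` is an `r`-local component at `X`: an equivalence class of the transitive
closure of `LocalEdgeStep` on `∂X`. -/
def LocalCompAt (G : SimpleGraph V) (r : ℕ) (X : Set V) (F : Set (Sym2 V)) : Prop :=
  ∃ e ∈ edgeBdry G X, F = {f | Relation.ReflTransGen (LocalEdgeStep G r X) e f}

/-- An edge set `F` is tight with respect to `X` if every vertex of `X`
is incident with an edge of `F`. -/
def TightLocalComp (X : Set V) (F : Set (Sym2 V)) : Prop :=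
  ∀ x ∈ X, ∃ e ∈ F, x ∈ e

/-- `X` is a tight `r`-local separator: at least two tight `r`-local components at `X`. -/
def TightLocalSeparator (G : SimpleGraph V) (r : ℕ) (X : Set V) : Prop :=
  ∃ F₁ F₂, F₁ ≠ F₂ ∧ LocalCompAt G r X F₁ ∧ LocalCompAt G r X F₂ ∧
    TightLocalComp X F₁ ∧ TightLocalComp X F₂

/-- `(E₁, X, E₂)` is an (oriented) `r`-local separation of `G`. -/
def IsLocalSep (G : SimpleGraph V) (r : ℕ) (E₁ : Set (Sym2 V)) (X : Set V)
    (E₂ : Set (Sym2 V)) : Prop :=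
  Disjoint E₁ E₂ ∧ E₁ ∪ E₂ = edgeBdry G X ∧
    ∀ F, LocalCompAt G r X F → F ⊆ E₁ ∨ F ⊆ E₂

/-- A tight `r`-local separation: each side includes a tight `r`-local component at `X`. -/
def TightLocalSep (G : SimpleGraph V) (r : ℕ) (E₁ : Set (Sym2 V)) (X : Set V)
    (E₂ : Set (Sym2 V)) : Prop :=
  IsLocalSep G r E₁ X E₂ ∧
  (∃ F, LocalCompAt G r X F ∧ TightLocalComp X F ∧ F ⊆ E₁) ∧
  ∃ F, LocalCompAt G r X F ∧ TightLocalComp X F ∧ F ⊆ E₂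

/-- The oriented `r`-local separation `s_r` induced by the oriented separation
`s = (A₁, A₂)`: its separator is `X = A₁ ∩ A₂`, and its sides are
`E_i = E_G(A_i ∖ X, X)`. -/
def inducedLocal (G : SimpleGraph V) (s : Set V × Set V) :
    Set (Sym2 V) × Set V × Set (Sym2 V) :=
  (edgesBetween G (s.1 \ (s.1 ∩ s.2)) (s.1 ∩ s.2), s.1 ∩ s.2,
    edgesBetween G (s.2 \ (s.1 ∩ s.2)) (s.1 ∩ s.2))

/-- Some cycle of `G` of length `≤ r` alternates between the disjoint sets `X` and `Y`:
it visits four distinct vertices `x, y, x', y'` in this cyclic order with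
`x, x' ∈ X` and `y, y' ∈ Y`. -/
def Alternates (G : SimpleGraph V) (r : ℕ) (X Y : Set V) : Prop :=
  ∃ (a : V) (C : G.Walk a a), C.IsCycle ∧ C.length ≤ r ∧
    ∃ (x y x' y' : V) (l₁ l₂ l₃ l₄ l₅ : List V),
      x ∈ X ∧ x' ∈ X ∧ y ∈ Y ∧ y' ∈ Y ∧ x ≠ x' ∧ y ≠ y' ∧
      C.support = l₁ ++ x :: l₂ ++ y :: l₃ ++ x' :: l₄ ++ y' :: l₅

/-- `X` and `Y` are `r`-coupled. -/
def RCoupled (G : SimpleGraph V) (r : ℕ) (X Y : Set V) : Prop :=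
  (X ∩ Y).Nonempty ∨ (Disjoint X Y ∧ Alternates G r X Y)

/-- The `X`-link for the side `Fi` of an `r`-local separation with separator `Y`:
vertices `x ∈ X ∖ Y` from which some walk in `W_r(X)` visits `Y` with its first
edge in `∂Y` lying in `Fi`. -/
def LocalLink (G : SimpleGraph V) (r : ℕ) (X Y : Set V) (Fi : Set (Sym2 V)) : Set V :=
  {x | x ∈ X \ Y ∧ ∃ (z : V) (W : G.Walk x z), MemWr G r X W ∧
      (∃ y ∈ Y, y ∈ W.support) ∧
      ∃ (e : Sym2 V) (l₁ l₂ : List (Sym2 V)), W.edges = l₁ ++ e :: l₂ ∧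
        e ∈ edgeBdry G Y ∧ e ∈ Fi ∧ ∀ e' ∈ l₁, e' ∉ edgeBdry G Y}

/-- The `r`-local separations `{E₁,X,E₂}` and `{F₁,Y,F₂}` cross. -/
def LocalCrosses (G : SimpleGraph V) (r : ℕ) (E₁ : Set (Sym2 V)) (X : Set V)
    (E₂ : Set (Sym2 V)) (F₁ : Set (Sym2 V)) (Y : Set V) (F₂ : Set (Sym2 V)) : Prop :=
  RCoupled G r X Y ∧ ∀ i j : Bool,
    (LocalLink G r X Y (cond j F₁ F₂)).Nonempty ∨
    (LocalLink G r Y X (cond i E₁ E₂)).Nonempty ∨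
    ((cond i E₁ E₂) ∩ (cond j F₁ F₂) ∩ edgeBdry G (X ∩ Y)).Nonempty

/-- The edge set of a walk, as a set. -/
def walkEdgeSet {G : SimpleGraph V} {a b : V} (W : G.Walk a b) : Set (Sym2 V) :=
  {e | e ∈ W.edges}

/-- The binary cycle space of `G` is generated by the cycles of length `≤ r`:
the edge set of every cycle is a symmetric difference of edge sets of cycles
of length `≤ r`. -/
def CycleSpaceGenShort (G : SimpleGraph V) (r : ℕ) : Prop :=
  ∀ ⦃a : V⦄ (C : G.Walk a a), C.IsCycle →
    ∃ L : List ((b : V) × G.Walk b b),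
      (∀ p ∈ L, p.2.IsCycle ∧ p.2.length ≤ r) ∧
      walkEdgeSet C = L.foldr (fun p E => symmDiff (walkEdgeSet p.2) E) ∅

/-! ### Local ⊤-stars and local bottlenecks -/

/-- `q` lists the three oriented `r`-local separations of an `r`-local ⊤-star. -/
def IsLocalTStar (G : SimpleGraph V) (r : ℕ)
    (q : Fin 3 → Set (Sym2 V) × Set V × Set (Sym2 V)) : Prop :=
  Function.Injective q ∧
  (∀ i, IsLocalSep G r (q i).1 (q i).2.1 (q i).2.2) ∧
  (∀ i j, i ≠ j → Disjoint (q i).1 (q j).1) ∧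
  (⋃ i, (q i).1) = edgeBdry G (⋃ i, (q i).2.1) ∧
  (∀ i, ∀ v ∈ (q i).2.1, ∃ j, j ≠ i ∧ v ∈ (q j).2.1) ∧
  ∀ F, LocalCompAt G r (⋃ i, (q i).2.1) F → ∃ i, F ⊆ (q i).1

/-- The `r`-local ⊤-star `q` is relevant with base `q 0`. -/
def RelevantLocalTStar (G : SimpleGraph V) (r : ℕ)
    (q : Fin 3 → Set (Sym2 V) × Set V × Set (Sym2 V)) : Prop :=
  IsLocalTStar G r q ∧ TightLocalSep G r (q 0).1 (q 0).2.1 (q 0).2.2 ∧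
  ∀ x ∈ ((q 1).2.1 ∩ (q 2).2.1) \ ⋂ j, (q j).2.1, ∀ i : Fin 3, i ≠ 0 →
    (∃ y ∈ ((q 0).2.1 ∩ (q i).2.1) \ ⋂ j, (q j).2.1, G.Adj x y) ∨
    ∃ F, LocalCompAt G r (⋃ j, (q j).2.1) F ∧ F ⊆ (q i).1 ∧
      (∃ e ∈ F, x ∈ e) ∧ ∃ e ∈ F, ∃ y ∈ (q 0).2.1 ∩ (q i).2.1, y ∈ e

/-- An `r`-local bottleneck of order `k` in `G`, encoded as a set of oriented
`r`-local separations closed under reversal. -/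
def IsLocalBottleneck (G : SimpleGraph V) (r k : ℕ)
    (β : Set (Set (Sym2 V) × Set V × Set (Sym2 V))) : Prop :=
  β.Nonempty ∧ (∀ q ∈ β, (q.2.2, q.2.1, q.1) ∈ β) ∧
  (∀ q ∈ β, TightLocalSep G r q.1 q.2.1 q.2.2 ∧ q.2.1.encard = (k : ℕ∞)) ∧
  ∀ p : Fin 3 → Set (Sym2 V) × Set V × Set (Sym2 V), RelevantLocalTStar G r p →
    (∀ i, ((p i).2.1).encard ≤ (k : ℕ∞)) → p 0 ∈ β → p 1 ∈ β ∨ p 2 ∈ β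


/-! ### Auxiliary lemmas for Statement 16 -/

section Statement16Aux

variable {G : SimpleGraph V} {r : ℕ}

lemma IsSep.symm {A B : Set V} (h : IsSep G A B) : IsSep G B A :=
  ⟨by rw [Set.union_comm]; exact h.1, fun b hb a ha hadj => h.2 a ha b hb hadj.symm⟩

lemma mem_union_sides {A B : Set V} (h : IsSep G A B) (v : V) : v ∈ A ∨ v ∈ B := by
  have : v ∈ A ∪ B := h.1 ▸ Set.mem_univ v
  exact this

/-- If `u` lies strictly on the `D₁`-side then any neighbour lies in `D₁`. -/
lemma adj_mem_left {D₁ D₂ : Set V} (hsep : IsSep G D₁ D₂) {u w : V}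
    (hadj : G.Adj u w) (hu : u ∈ D₁ \ D₂) : w ∈ D₁ := by
  rcases mem_union_sides hsep w with hw | hw
  · exact hw
  · by_cases hw1 : w ∈ D₁
    · exact hw1
    · exact absurd hadj (hsep.2 u hu w ⟨hw, hw1⟩)

lemma escape_aux {R T : Set V} (hRT : ∀ a ∈ R, ∀ b, G.Adj a b → b ∈ R ∨ b ∈ T)
    {p q : V} (W : G.Walk p q) (hp : p ∈ R) (hq : q ∉ R) :
    ∃ u w, u ∈ R ∧ w ∈ T ∧ G.Adj u w := by
  induction W with
  | nil => exact absurd hp hq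
  | cons h W ih =>
    rcases hRT _ hp _ h with hb | hb
    · exact ih hb hq
    · exact ⟨_, _, hp, hb, h⟩

/-- From a vertex in the (strict) corner region, one can reach `X ∪ Y` directly. -/
lemma corner_escape (hG : G.Connected) {A₁ A₂ C₁ C₂ : Set V}
    (h₁ : IsSep G A₁ A₂) (h₂ : IsSep G C₁ C₂) (hne : (A₁ ∩ A₂).Nonempty)
    {v : V} (hv : v ∈ (A₁ \ A₂) ∩ (C₂ \ C₁)) :
    ∃ u w, u ∈ (A₁ \ A₂) ∩ (C₂ \ C₁) ∧ w ∈ (A₁ ∩ A₂) ∪ (C₁ ∩ C₂) ∧ G.Adj u w := by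
  obtain ⟨x₀, hx₀⟩ := hne
  obtain ⟨W⟩ := hG.preconnected v x₀
  refine escape_aux ?_ W hv (fun h => h.1.2 hx₀.2)
  intro a ha b hadj
  by_cases hbA : b ∈ A₁ ∩ A₂
  · exact Or.inr (Or.inl hbA)
  by_cases hbC : b ∈ C₁ ∩ C₂
  · exact Or.inr (Or.inr hbC)
  left
  have hbA₁ : b ∈ A₁ := adj_mem_left h₁ hadj ha.1
  have hbC₂ : b ∈ C₂ := adj_mem_left h₂.symm hadj ⟨ha.2.1, ha.2.2⟩
  exact ⟨⟨hbA₁, fun h => hbA ⟨hbA₁, h⟩⟩, ⟨hbC₂, fun h => hbC ⟨h, hbC₂⟩⟩⟩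

/-- A walk starting strictly on the `D₂`-side and ending in `D₁` meets the separator,
and its first separator-boundary edge comes from the `D₂`-side. -/
lemma crossFirst {D₁ D₂ Z : Set V} (hsep : IsSep G D₁ D₂) (hZ : Z = D₁ ∩ D₂)
    {p q : V} (W : G.Walk p q) (hp : p ∈ D₂ \ D₁) (hq : q ∈ D₁) :
    (∃ z ∈ Z, z ∈ W.support) ∧
    ∃ e l₁ l₂, W.edges = l₁ ++ e :: l₂ ∧ e ∈ edgeBdry G Z ∧
      e ∈ edgesBetween G (D₂ \ Z) Z ∧ ∀ e' ∈ l₁, e' ∉ edgeBdry G Z := by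
  induction W with
  | nil => exact absurd hq hp.2
  | @cons p b q h W ih =>
    have hpZ : p ∉ Z := fun hz => hp.2 (hZ ▸ hz).1
    by_cases hbZ : b ∈ Z
    · constructor
      · exact ⟨b, hbZ, by simp [Walk.support_cons]⟩
      · refine ⟨s(p, b), [], W.edges, by simp, ⟨b, p, h.symm, Sym2.eq_swap, hbZ, hpZ⟩,
          ⟨p, b, h, rfl, ⟨hp.1, hpZ⟩, hbZ⟩, by simp⟩
    · have hbD : b ∈ D₂ \ D₁ := by
        rcases mem_union_sides hsep b with hb | hb
        · by_cases hb2 : b ∈ D₂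
          · exact absurd (hZ ▸ ⟨hb, hb2⟩) hbZ
          · exact absurd h.symm (hsep.2 b ⟨hb, hb2⟩ p hp)
        · refine ⟨hb, fun hb1 => hbZ (hZ ▸ ⟨hb1, hb⟩)⟩
      obtain ⟨⟨z, hz, hzs⟩, e, l₁, l₂, hed, heB, heF, hl₁⟩ := ih hbD hq
      refine ⟨⟨z, hz, by simp [Walk.support_cons, hzs]⟩,
        e, s(p, b) :: l₁, l₂, by simp [hed], heB, heF, ?_⟩
      intro e' he'
      rcases List.mem_cons.mp he' with he' | he'
      · rintro ⟨u', v', _, hpb, hu', hv'⟩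
        rcases Sym2.eq_iff.mp (he'.symm.trans hpb) with ⟨h1, h2⟩ | ⟨h1, h2⟩
        · exact hpZ (by rw [h1]; exact hu')
        · exact hbZ (by rw [h2]; exact hu')
      · exact hl₁ e' he'

/-- A walk starting strictly on the `D₁`-side: its first separator-boundary edge
comes from the `D₁`-side. -/
lemma firstEdge {D₁ D₂ Z : Set V} (hsep : IsSep G D₁ D₂) (hZ : Z = D₁ ∩ D₂)
    {p q : V} (W : G.Walk p q) (hp : p ∈ D₁ \ D₂) {e : Sym2 V} {l₁ l₂ : List (Sym2 V)}
    (hedges : W.edges = l₁ ++ e :: l₂) (hl₁ : ∀ e' ∈ l₁, e' ∉ edgeBdry G Z)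
    (he : e ∈ edgeBdry G Z) : ∃ w ∈ D₁ \ D₂, ∃ z' ∈ Z, e = s(w, z') := by
  induction W generalizing l₁ with
  | nil => exact absurd hedges.symm (by simp)
  | @cons p b q h W ih =>
    have hpZ : p ∉ Z := fun hz => hp.2 (by rw [hZ] at hz; exact hz.2)
    rw [Walk.edges_cons] at hedges
    cases l₁ with
    | nil =>
      simp only [List.nil_append, List.cons.injEq] at hedges
      obtain ⟨he1, _⟩ := hedges
      obtain ⟨u', v', _, heq, hu', hv'⟩ := he
      rcases Sym2.eq_iff.mp (he1.trans heq) with ⟨h1, h2⟩ | ⟨h1, h2⟩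
      · exact absurd (by rw [h1]; exact hu') hpZ
      · exact ⟨p, hp, b, by rw [h2]; exact hu', he1.symm⟩
    | cons f l₁' =>
      simp only [List.cons_append, List.cons.injEq] at hedges
      obtain ⟨hf, hedges'⟩ := hedges
      have hfB : s(p, b) ∉ edgeBdry G Z := hf ▸ hl₁ f (by simp)
      have hbZ : b ∉ Z := fun hz => hfB ⟨b, p, h.symm, Sym2.eq_swap, hz, hpZ⟩
      have hbD : b ∈ D₁ \ D₂ := by
        rcases mem_union_sides hsep b with hb | hb
        · refine ⟨hb, fun hb2 => hbZ (hZ ▸ ⟨hb, hb2⟩)⟩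
        · by_cases hb1 : b ∈ D₁
          · exact ⟨hb1, fun hb2 => hbZ (hZ ▸ ⟨hb1, hb2⟩)⟩
          · exact absurd h (hsep.2 p hp b ⟨hb, hb1⟩)
      exact ih hbD hedges' (fun e' he' => hl₁ e' (by simp [he']))

lemma emptyLink {D₁ D₂ Z S : Set V} (hsep : IsSep G D₁ D₂) (hZ : Z = D₁ ∩ D₂)
    (hS : S \ Z ⊆ D₁ \ D₂) :
    LocalLink G r S Z (edgesBetween G (D₂ \ Z) Z) = ∅ := by
  ext x
  simp only [Set.mem_empty_iff_false, iff_false]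
  rintro ⟨hxS, z, W, _, _, e, l₁, l₂, hed, heB, heF, hl₁⟩
  obtain ⟨w, hw, z', hz', hewz⟩ := firstEdge hsep hZ W (hS hxS) hed hl₁ heB
  obtain ⟨u', v', _, heq, hu', hv'⟩ := heF
  rcases Sym2.eq_iff.mp (hewz.symm.trans heq) with ⟨h1, h2⟩ | ⟨h1, h2⟩
  · exact hw.2 (by rw [h1]; exact hu'.1)
  · have hwZ : w ∈ Z := by rw [h1]; exact hv'
    rw [hZ] at hwZ
    exact hw.2 hwZ.2

lemma emptyInter {A₁ A₂ C₁ C₂ X Y : Set V} (hX : X = A₁ ∩ A₂) (hY : Y = C₁ ∩ C₂)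
    (hac : A₁ ⊆ C₁) :
    edgesBetween G (A₁ \ X) X ∩ edgesBetween G (C₂ \ Y) Y = ∅ := by
  ext e
  simp only [Set.mem_inter_iff, Set.mem_empty_iff_false, iff_false, not_and]
  rintro ⟨u, v, _, rfl, hu, hv⟩ ⟨u', v', _, heq, hu', hv'⟩
  rcases Sym2.eq_iff.mp heq with ⟨h1, h2⟩ | ⟨h1, h2⟩
  · have huY : u ∈ Y := by rw [hY]; exact ⟨hac hu.1, by rw [h1]; exact hu'.1⟩
    exact hu'.2 (by rw [← h1]; exact huY)
  · have hvA₁ : v ∈ A₁ := by rw [hX] at hv; exact hv.1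
    have hvY : v ∈ Y := by rw [hY]; exact ⟨hac hvA₁, by rw [h2]; exact hu'.1⟩
    exact hu'.2 (by rw [← h2]; exact hvY)

/-- Refutation of one orientation pair of `LocalCrosses`, given a nesting. -/
lemma nested_kill {A₁ A₂ C₁ C₂ X Y : Set V}
    (h₁ : IsSep G A₁ A₂) (h₂ : IsSep G C₁ C₂) (hX : X = A₁ ∩ A₂) (hY : Y = C₁ ∩ C₂)
    (hac : A₁ ⊆ C₁) (hca : C₂ ⊆ A₂) :
    ¬ ((LocalLink G r X Y (edgesBetween G (C₂ \ Y) Y)).Nonempty ∨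
       (LocalLink G r Y X (edgesBetween G (A₁ \ X) X)).Nonempty ∨
       (edgesBetween G (A₁ \ X) X ∩ edgesBetween G (C₂ \ Y) Y ∩
          edgeBdry G (X ∩ Y)).Nonempty) := by
  rintro (h | h | h)
  · rw [emptyLink h₂ hY ?_] at h
    · exact Set.not_nonempty_empty h
    · rintro x ⟨hx, hxY⟩
      have hxC₁ : x ∈ C₁ := hac (hX ▸ hx : x ∈ A₁ ∩ A₂).1
      exact ⟨hxC₁, fun hc => hxY (hY ▸ ⟨hxC₁, hc⟩)⟩
  · rw [emptyLink h₁.symm (by rw [hX, Set.inter_comm]) ?_] at h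
    · exact Set.not_nonempty_empty h
    · rintro y ⟨hy, hyX⟩
      have hyA₂ : y ∈ A₂ := hca (hY ▸ hy : y ∈ C₁ ∩ C₂).2
      exact ⟨hyA₂, fun ha => hyX (hX ▸ ⟨ha, hyA₂⟩)⟩
  · obtain ⟨e, he⟩ := h
    have := emptyInter (G := G) hX hY hac
    rw [this] at he
    simp at he

lemma pOf {A₁ A₂ C₁ C₂ : Set V} (hu₁ : A₁ ∪ A₂ = Set.univ) (hu₂ : C₁ ∪ C₂ = Set.univ)
    (hn : ¬ SepGE (A₁, A₂) (C₁, C₂)) :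
    ((A₁ \ A₂) ∩ (C₂ \ C₁)).Nonempty ∨ ((A₁ ∩ A₂) ∩ (C₂ \ C₁)).Nonempty ∨
      ((C₁ ∩ C₂) ∩ (A₁ \ A₂)).Nonempty := by
  rw [SepGE, not_and_or] at hn
  rcases hn with hn | hn
  · obtain ⟨v, hvA, hvC⟩ := Set.not_subset.mp hn
    have hvC₂ : v ∈ C₂ := by
      have : v ∈ C₁ ∪ C₂ := hu₂ ▸ Set.mem_univ v
      rcases this with h | h
      · exact absurd h hvC
      · exact h
    by_cases hvA₂ : v ∈ A₂
    · exact Or.inr (Or.inl ⟨v, ⟨hvA, hvA₂⟩, hvC₂, hvC⟩)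
    · exact Or.inl ⟨v, ⟨hvA, hvA₂⟩, hvC₂, hvC⟩
  · obtain ⟨v, hvC, hvA⟩ := Set.not_subset.mp hn
    have hvA₁ : v ∈ A₁ := by
      have : v ∈ A₁ ∪ A₂ := hu₁ ▸ Set.mem_univ v
      rcases this with h | h
      · exact h
      · exact absurd h hvA
    by_cases hvC₁ : v ∈ C₁
    · exact Or.inr (Or.inr ⟨v, ⟨hvC₁, hvC⟩, hvA₁, hvA⟩)
    · exact Or.inl ⟨v, ⟨hvA₁, hvA⟩, hvC, hvC₁⟩

/-- Construction of a vertex of the `X`-link: starting point strictly in `C₂`,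
target in `C₁`. -/
lemma linkX {C₁ C₂ X Y : Set V} (h₂ : IsSep G C₁ C₂) (hY : Y = C₁ ∩ C₂)
    (ht : Rtomic G r X) {x x' : V} (hx : x ∈ X ∩ (C₂ \ C₁)) (hx' : x' ∈ X ∩ C₁) :
    x ∈ LocalLink G r X Y (edgesBetween G (C₂ \ Y) Y) := by
  have hne : x ≠ x' := fun h => hx.2.2 (h ▸ hx'.2)
  obtain ⟨W, hW⟩ := ht x hx.1 x' hx'.1 hne
  obtain ⟨⟨z, hz, hzs⟩, e, l₁, l₂, hed, heB, heF, hl₁⟩ :=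
    crossFirst h₂ hY W hx.2 hx'.2
  exact ⟨⟨hx.1, fun h => hx.2.2 (hY ▸ h).1⟩, x', W, hW, ⟨z, hz, hzs⟩,
    e, l₁, l₂, hed, heB, heF, hl₁⟩

/-- The crossing condition transferred to regions, in one representative orientation. -/
def Pprop (A₁ A₂ C₁ C₂ : Set V) : Prop :=
  ((A₁ \ A₂) ∩ (C₂ \ C₁)).Nonempty ∨ ((A₁ ∩ A₂) ∩ (C₂ \ C₁)).Nonempty ∨
    ((C₁ ∩ C₂) ∩ (A₁ \ A₂)).Nonempty

/-- Main lemma producing one orientation pair of the local-crossing condition. -/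
lemma masterQ (hG : G.Connected) {A₁ A₂ C₁ C₂ X Y : Set V}
    (h₁ : IsSep G A₁ A₂) (h₂ : IsSep G C₁ C₂)
    (hX : X = A₁ ∩ A₂) (hY : Y = C₁ ∩ C₂)
    (ht₁ : Rtomic G r X) (ht₂ : Rtomic G r Y) (hXne : X.Nonempty)
    (P12 : Pprop A₁ A₂ C₁ C₂) (P11 : Pprop A₁ A₂ C₂ C₁)
    (P21 : Pprop A₂ A₁ C₂ C₁) (P22 : Pprop A₂ A₁ C₁ C₂) :
    (LocalLink G r X Y (edgesBetween G (C₂ \ Y) Y)).Nonempty ∨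
    (LocalLink G r Y X (edgesBetween G (A₁ \ X) X)).Nonempty ∨
    (edgesBetween G (A₁ \ X) X ∩ edgesBetween G (C₂ \ Y) Y ∩
        edgeBdry G (X ∩ Y)).Nonempty := by
  have hXA₁ : X ⊆ A₁ := hX ▸ Set.inter_subset_left
  have hXA₂ : X ⊆ A₂ := hX ▸ Set.inter_subset_right
  have hYC₁ : Y ⊆ C₁ := hY ▸ Set.inter_subset_left
  have hYC₂ : Y ⊆ C₂ := hY ▸ Set.inter_subset_right
  have hneAA : (A₁ ∩ A₂).Nonempty := hX ▸ hXne
  have hneAA' : (A₂ ∩ A₁).Nonempty := by rwa [Set.inter_comm]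
  have linkYE : (Y ∩ (A₁ \ A₂)).Nonempty → (Y ∩ A₂).Nonempty →
      (LocalLink G r Y X (edgesBetween G (A₁ \ X) X)).Nonempty := by
    rintro ⟨y, hy⟩ ⟨y', hy'⟩
    exact ⟨y, linkX h₁.symm (by rw [hX, Set.inter_comm]) ht₂ hy hy'⟩
  -- keyX: given a vertex of X strictly in C₂
  have keyX : (X ∩ (C₂ \ C₁)).Nonempty →
      (LocalLink G r X Y (edgesBetween G (C₂ \ Y) Y)).Nonempty ∨
      (LocalLink G r Y X (edgesBetween G (A₁ \ X) X)).Nonempty := by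
    rintro ⟨x, hx⟩
    by_cases hXC1 : (X ∩ C₁).Nonempty
    · obtain ⟨x', hx'⟩ := hXC1
      exact Or.inl ⟨x, linkX h₂ hY ht₁ hx hx'⟩
    · have hX1 : ∀ z ∈ X, z ∉ C₁ := fun z hz hc => hXC1 ⟨z, hz, hc⟩
      -- from P11 obtain y ∈ Y ∩ (A₁ \ A₂)
      have hyA1 : (Y ∩ (A₁ \ A₂)).Nonempty := by
        rcases P11 with ⟨v, hv⟩ | ⟨v, hv⟩ | ⟨v, hv⟩
        · -- corner (A₁\A₂) ∩ (C₁\C₂)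
          obtain ⟨u, w, hu, hw, hadj⟩ := corner_escape hG h₁ h₂.symm hneAA hv
          rcases hw with hw | hw
          · have hwC₁ : w ∈ C₁ := adj_mem_left h₂ hadj hu.2
            exact absurd hwC₁ (hX1 w (hX ▸ hw))
          · have hwY : w ∈ Y := hY ▸ ⟨hw.2, hw.1⟩
            have hwA₁ : w ∈ A₁ := adj_mem_left h₁ hadj hu.1
            have hwA₂ : w ∉ A₂ := fun h => hX1 w (hX ▸ ⟨hwA₁, h⟩) (hYC₁ hwY)
            exact ⟨w, hwY, hwA₁, hwA₂⟩
        · exact absurd hv.2.1 (hX1 v (hX ▸ hv.1))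
        · exact ⟨v, hY ▸ ⟨hv.1.2, hv.1.1⟩, hv.2⟩
      -- from P21 obtain y' ∈ Y ∩ (A₂ \ A₁)
      have hyA2 : (Y ∩ A₂).Nonempty := by
        rcases P21 with ⟨v, hv⟩ | ⟨v, hv⟩ | ⟨v, hv⟩
        · -- corner (A₂\A₁) ∩ (C₁\C₂)
          obtain ⟨u, w, hu, hw, hadj⟩ := corner_escape hG h₁.symm h₂.symm hneAA' hv
          rcases hw with hw | hw
          · have hwC₁ : w ∈ C₁ := adj_mem_left h₂ hadj hu.2
            exact absurd hwC₁ (hX1 w (hX ▸ ⟨hw.2, hw.1⟩))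
          · have hwY : w ∈ Y := hY ▸ ⟨hw.2, hw.1⟩
            have hwA₂ : w ∈ A₂ := adj_mem_left h₁.symm hadj hu.1
            exact ⟨w, hwY, hwA₂⟩
        · exact absurd hv.2.1 (hX1 v (hX ▸ ⟨hv.1.2, hv.1.1⟩))
        · exact ⟨v, hY ▸ ⟨hv.1.2, hv.1.1⟩, hv.2.1⟩
      exact Or.inr (linkYE hyA1 hyA2)
  have keyY : (Y ∩ (A₁ \ A₂)).Nonempty →
      (LocalLink G r X Y (edgesBetween G (C₂ \ Y) Y)).Nonempty ∨
      (LocalLink G r Y X (edgesBetween G (A₁ \ X) X)).Nonempty := by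
    intro hyA1
    by_cases hYA2 : (Y ∩ A₂).Nonempty
    · exact Or.inr (linkYE hyA1 hYA2)
    · have hY2 : ∀ z ∈ Y, z ∉ A₂ := fun z hz ha => hYA2 ⟨z, hz, ha⟩
      have hxC2 : (X ∩ (C₂ \ C₁)).Nonempty := by
        rcases P22 with ⟨v, hv⟩ | ⟨v, hv⟩ | ⟨v, hv⟩
        · -- corner (A₂\A₁) ∩ (C₂\C₁)
          obtain ⟨u, w, hu, hw, hadj⟩ := corner_escape hG h₁.symm h₂ hneAA' hv
          rcases hw with hw | hw
          · have hwX : w ∈ X := hX ▸ ⟨hw.2, hw.1⟩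
            have hwC₂ : w ∈ C₂ := adj_mem_left h₂.symm hadj hu.2
            have hwC₁ : w ∉ C₁ := fun hc => hY2 w (hY ▸ ⟨hc, hwC₂⟩) (hXA₂ hwX)
            exact ⟨w, hwX, hwC₂, hwC₁⟩
          · have hwA₂ : w ∈ A₂ := adj_mem_left h₁.symm hadj hu.1
            exact absurd hwA₂ (hY2 w (by rw [hY]; exact hw))
        · exact ⟨v, hX ▸ ⟨hv.1.2, hv.1.1⟩, hv.2⟩
        · exact absurd hv.2.1 (hY2 v (by rw [hY]; exact hv.1))
      exact keyX hxC2
  -- main case analysis on P12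
  rcases P12 with ⟨v, hv⟩ | ⟨v, hv⟩ | ⟨v, hv⟩
  · obtain ⟨u, w, hu, hw, hadj⟩ := corner_escape hG h₁ h₂ hneAA hv
    have hwX' : w ∈ X ∨ w ∈ Y := by
      rcases hw with hw | hw
      · exact Or.inl (hX ▸ hw)
      · exact Or.inr (hY ▸ hw)
    by_cases hwX : w ∈ X
    · by_cases hwY : w ∈ Y
      · -- the desired boundary edge
        refine Or.inr (Or.inr ⟨s(u, w), ⟨⟨u, w, hadj, rfl, ⟨hu.1.1,
          fun h => hu.1.2 (hXA₂ h)⟩, hwX⟩, ⟨u, w, hadj, rfl, ⟨hu.2.1,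
          fun h => hu.2.2 (hYC₁ h)⟩, hwY⟩⟩, ?_⟩)
        exact ⟨w, u, hadj.symm, Sym2.eq_swap, ⟨hwX, hwY⟩, fun h => hu.1.2 (hXA₂ h.1)⟩
      · -- w ∈ X \ Y, hence strictly in C₂
        have hwC₂ : w ∈ C₂ := adj_mem_left h₂.symm hadj hu.2
        have hwC₁ : w ∉ C₁ := fun hc => hwY (hY ▸ ⟨hc, hwC₂⟩)
        rcases keyX ⟨w, hwX, hwC₂, hwC₁⟩ with h | h
        · exact Or.inl h
        · exact Or.inr (Or.inl h)
    · have hwY : w ∈ Y := hwX'.resolve_left hwX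
      have hwA₁ : w ∈ A₁ := adj_mem_left h₁ hadj hu.1
      have hwA₂ : w ∉ A₂ := fun h => hwX (hX ▸ ⟨hwA₁, h⟩)
      rcases keyY ⟨w, hwY, hwA₁, hwA₂⟩ with h | h
      · exact Or.inl h
      · exact Or.inr (Or.inl h)
  · rcases keyX ⟨v, hX ▸ hv.1, hv.2⟩ with h | h
    · exact Or.inl h
    · exact Or.inr (Or.inl h)
  · rcases keyY ⟨v, hY ▸ hv.1, hv.2⟩ with h | h
    · exact Or.inl h
    · exact Or.inr (Or.inl h)

lemma split3 {α : Type*} {l : List α} {b c : α} (hb : b ∈ l) (hc : l.getLast? = some c)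
    (hbc : b ≠ c) : ∃ p q₁ q₂, l = p ++ b :: (q₁ ++ c :: q₂) := by
  obtain ⟨p, t, rfl⟩ := List.append_of_mem hb
  rw [List.getLast?_append_of_ne_nil _ (by simp)] at hc
  have hmem : c ∈ b :: t := List.mem_of_mem_getLast? (by rw [hc]; rfl)
  have hct : c ∈ t := (List.mem_cons.mp hmem).resolve_left (fun h => hbc h.symm)
  obtain ⟨q₁, q₂, rfl⟩ := List.append_of_mem hct
  exact ⟨p, q₁, q₂, rfl⟩

lemma walk_support_getLast? {a b : V} (W : G.Walk a b) :
    W.support.getLast? = some b := by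
  rw [List.getLast?_eq_getLast W.support_ne_nil]
  exact congrArg some W.getLast_support

lemma length_rotate [DecidableEq V] {a u : V} (c : G.Walk a a) (h : u ∈ c.support) :
    (c.rotate u h).length = c.length := by
  have h2 := congr_arg Walk.length (c.take_spec h)
  rw [Walk.length_append] at h2
  simp only [Walk.rotate, Walk.length_append]
  omega

lemma exists_firstEdge {u v : V} (P : G.Walk u v) (h : u ≠ v) :
    ∃ w, s(u, w) ∈ P.edges := by
  cases P with
  | nil => exact absurd rfl h
  | @cons u b v h' W =>
    exact ⟨b, by rw [Walk.edges_cons]; exact List.mem_cons_self⟩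

lemma exists_lastEdge {u v : V} (P : G.Walk u v) (h : u ≠ v) :
    ∃ w, s(w, v) ∈ P.edges := by
  induction P with
  | nil => exact absurd rfl h
  | @cons a b c h' W ih =>
    by_cases hbc : b = c
    · subst hbc
      exact ⟨a, by simp⟩
    · obtain ⟨w, hw⟩ := ih hbc
      exact ⟨w, by simp [hw]⟩

lemma seg {X S₁ S₂ : Set V} {p q : V} {W : G.Walk p q} (h : ConcatLocalPaths G r X W)
    (hclass : ∀ m ∈ X, m ∈ S₁ ∨ m ∈ S₂) (hp : p ∈ S₁) (hq : q ∈ S₂)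
    (hdisj : ∀ m, m ∈ S₁ → m ∈ S₂ → False) :
    ∃ (u v : V) (P : G.Walk u v), IsLocalXPath G r X P ∧ u ∈ X ∩ S₁ ∧ v ∈ X ∩ S₂ := by
  induction h with
  | @single u v W hW => exact ⟨u, v, W, hW, ⟨hW.1.1.1, hp⟩, ⟨hW.1.1.2.1, hq⟩⟩
  | @comp u v w W₁ W₂ h₁ h₂ ih =>
    rcases hclass v h₁.1.1.2.1 with hS | hS
    · exact ih hS hq
    · exact ⟨u, v, W₁, h₁, ⟨h₁.1.1.1, hp⟩, ⟨h₁.1.1.2.1, hS⟩⟩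

lemma alt_build {P Q : Set V} {u v : V} (T : G.Walk u v) (D : G.Walk v u)
    (hC : (T.append D).IsCycle) (hlen : (T.append D).length ≤ r)
    (huv : u ≠ v) (hu : u ∈ P) (hv : v ∈ P)
    (hPQ : ∀ a, a ∈ P → a ∈ Q → False)
    {b₁ b₂ : V} (hb₁T : b₁ ∈ T.support) (hb₂D : b₂ ∈ D.support)
    (hb₁ : b₁ ∈ Q) (hb₂ : b₂ ∈ Q) :
    Alternates G r P Q ∧ Alternates G r Q P := by
  have hb₁u : b₁ ≠ u := fun h => hPQ u hu (h ▸ hb₁)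
  have hb₁v : b₁ ≠ v := fun h => hPQ v hv (h ▸ hb₁)
  have hb₂u : b₂ ≠ u := fun h => hPQ u hu (h ▸ hb₂)
  have hb₂v : b₂ ≠ v := fun h => hPQ v hv (h ▸ hb₂)
  have hb₁T' : b₁ ∈ T.support.tail := by
    have h0 := hb₁T
    rw [Walk.support_eq_cons] at h0
    exact (List.mem_cons.mp h0).resolve_left hb₁u
  have hb₂D' : b₂ ∈ D.support.tail := by
    have h0 := hb₂D
    rw [Walk.support_eq_cons] at h0
    exact (List.mem_cons.mp h0).resolve_left hb₂v
  have hTne : T.support.tail ≠ [] := fun h => by simp [h] at hb₁T'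
  have hDne : D.support.tail ≠ [] := fun h => by simp [h] at hb₂D'
  have hTlast : T.support.tail.getLast? = some v := by
    have h0 := walk_support_getLast? T
    rw [Walk.support_eq_cons] at h0
    cases hT : T.support.tail with
    | nil => exact absurd hT hTne
    | cons x l' =>
      rw [hT] at h0
      rwa [List.getLast?_cons_cons] at h0
  have hDlast : D.support.tail.getLast? = some u := by
    have h0 := walk_support_getLast? D
    rw [Walk.support_eq_cons] at h0
    cases hD : D.support.tail with
    | nil => exact absurd hD hDne
    | cons x l' =>
      rw [hD] at h0
      rwa [List.getLast?_cons_cons] at h0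
  obtain ⟨p, q₁, q₂, hT⟩ := split3 hb₁T' hTlast hb₁v
  obtain ⟨d₁, e₁, e₂, hD⟩ := split3 hb₂D' hDlast hb₂u
  have hsupp : (T.append D).support = u :: (T.support.tail ++ D.support.tail) := by
    rw [Walk.support_append, Walk.support_eq_cons T]
    rfl
  have hnodup : (T.support.tail ++ D.support.tail).Nodup := by
    have h2 := hC.support_nodup
    rw [hsupp] at h2
    simpa using h2
  have hb12 : b₁ ≠ b₂ := fun h =>
    (List.disjoint_of_nodup_append hnodup) hb₁T' (h ▸ hb₂D')
  constructor
  · exact ⟨u, T.append D, hC, hlen, u, b₁, v, b₂, [], p, q₁, q₂ ++ d₁, e₁ ++ u :: e₂,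
      hu, hv, hb₁, hb₂, huv, hb12, by rw [hsupp, hT, hD]; simp⟩
  · exact ⟨u, T.append D, hC, hlen, b₁, v, b₂, u, u :: p, q₁, q₂ ++ d₁, e₁, e₂,
      hb₁, hb₂, hv, hu, hb12, huv.symm, by rw [hsupp, hT, hD]; simp⟩

lemma altFromPath {D₁ D₂ Z S : Set V} (hsep : IsSep G D₁ D₂) (hZ : Z = D₁ ∩ D₂)
    {u v : V} {P₀ : G.Walk u v} (hP₀ : IsLocalXWalk G r S P₀)
    (hu : u ∈ S ∩ (D₁ \ D₂)) (hv : v ∈ S ∩ (D₂ \ D₁))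
    (hdisj : ∀ z, z ∈ S → z ∈ Z → False) :
    Alternates G r S Z ∧ Alternates G r Z S := by
  classical
  have huv : u ≠ v := fun h => hu.2.2 (h ▸ hv.2.1)
  rcases hP₀.2 with ⟨a, O, hOc, hOlen, hsub⟩ | hlen
  swap
  · exact absurd (Walk.adj_of_length_eq_one hlen) (hsep.2 u hu.2 v hv.2)
  obtain ⟨w₁, hw₁⟩ := exists_firstEdge P₀ huv
  obtain ⟨w₂, hw₂⟩ := exists_lastEdge P₀ huv
  have huO : u ∈ O.support := O.fst_mem_support_of_mem_edges (hsub _ hw₁)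
  have hvO : v ∈ O.support := O.snd_mem_support_of_mem_edges (hsub _ hw₂)
  have hO₁c : (O.rotate u huO).IsCycle := hOc.rotate huO
  have hO₁len : (O.rotate u huO).length ≤ r := by rw [length_rotate]; exact hOlen
  have hvO₁ : v ∈ (O.rotate u huO).support := by
    have hperm := Walk.support_rotate O u huO
    have hvtail : v ∈ O.support.tail := by
      have h0 := hvO
      rw [Walk.support_eq_cons] at h0
      rcases List.mem_cons.mp h0 with h | h
      · subst h
        have htne : O.support.tail ≠ [] := by
          intro hnil
          have h3 := hOc.three_le_length
          have h4 : O.support.length = O.length + 1 := O.length_support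
          rw [Walk.support_eq_cons, hnil] at h4
          simp only [List.length_cons, List.length_nil] at h4
          omega
        have h5 := walk_support_getLast? O
        rw [Walk.support_eq_cons] at h5
        cases hO : O.support.tail with
        | nil => exact absurd hO htne
        | cons x l' =>
          rw [hO] at h5
          rw [List.getLast?_cons_cons] at h5
          exact List.mem_of_mem_getLast? (by rw [h5]; rfl)
      · exact h
    rw [← hperm.mem_iff] at hvtail
    exact List.mem_of_mem_tail hvtail
  have hTD := (O.rotate u huO).take_spec hvO₁
  obtain ⟨⟨z₁, hz₁, hz₁s⟩, -⟩ := crossFirst (Z := Z) hsep.symm (by rw [hZ, Set.inter_comm])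
    ((O.rotate u huO).takeUntil v hvO₁) hu.2 hv.2.1
  obtain ⟨⟨z₂, hz₂, hz₂s⟩, -⟩ := crossFirst hsep hZ
    ((O.rotate u huO).dropUntil v hvO₁) hv.2 hu.2.1
  exact alt_build _ _ (by rw [hTD]; exact hO₁c) (by rw [hTD]; exact hO₁len)
    huv hu.1 hv.1 hdisj hz₁s hz₂s hz₁ hz₂

lemma cornerR (hG : G.Connected) {A₁ A₂ C₁ C₂ X Y : Set V}
    (h₁ : IsSep G A₁ A₂) (h₂ : IsSep G C₁ C₂)
    (hX : X = A₁ ∩ A₂) (hY : Y = C₁ ∩ C₂) (hXne : X.Nonempty)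
    (hdisj : ∀ z, z ∈ X → z ∈ Y → False)
    {v : V} (hv : v ∈ (A₁ \ A₂) ∩ (C₂ \ C₁)) :
    (X ∩ (C₂ \ C₁)).Nonempty ∨ (Y ∩ (A₁ \ A₂)).Nonempty := by
  obtain ⟨u, w, hu, hw, hadj⟩ := corner_escape hG h₁ h₂ (by rw [← hX]; exact hXne) hv
  rcases hw with hw | hw
  · have hwX : w ∈ X := by rw [hX]; exact hw
    have hwC₂ : w ∈ C₂ := adj_mem_left h₂.symm hadj hu.2
    have hwC₁ : w ∉ C₁ := fun hc => hdisj w hwX (by rw [hY]; exact ⟨hc, hwC₂⟩)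
    exact Or.inl ⟨w, hwX, hwC₂, hwC₁⟩
  · have hwY : w ∈ Y := by rw [hY]; exact hw
    have hwA₁ : w ∈ A₁ := adj_mem_left h₁ hadj hu.1
    have hwA₂ : w ∉ A₂ := fun ha => hdisj w (by rw [hX]; exact ⟨hwA₁, ha⟩) hwY
    exact Or.inr ⟨w, hwY, hwA₁, hwA₂⟩

lemma rcoupled (hG : G.Connected) {A₁ A₂ C₁ C₂ X Y : Set V}
    (h₁ : IsSep G A₁ A₂) (h₂ : IsSep G C₁ C₂)
    (hX : X = A₁ ∩ A₂) (hY : Y = C₁ ∩ C₂)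
    (ht₁ : Rtomic G r X) (ht₂ : Rtomic G r Y) (hXne : X.Nonempty)
    (P12 : Pprop A₁ A₂ C₁ C₂) (P11 : Pprop A₁ A₂ C₂ C₁)
    (P21 : Pprop A₂ A₁ C₂ C₁) (P22 : Pprop A₂ A₁ C₁ C₂) :
    RCoupled G r X Y := by
  by_cases hXY : (X ∩ Y).Nonempty
  · exact Or.inl hXY
  have hdisj : ∀ z, z ∈ X → z ∈ Y → False := fun z h h' => hXY ⟨z, h, h'⟩
  have hdisj' : ∀ z, z ∈ Y → z ∈ X → False := fun z h h' => hdisj z h' h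
  have hX' : X = A₂ ∩ A₁ := by rw [hX, Set.inter_comm]
  have hY' : Y = C₂ ∩ C₁ := by rw [hY, Set.inter_comm]
  have R12 : (X ∩ (C₂ \ C₁)).Nonempty ∨ (Y ∩ (A₁ \ A₂)).Nonempty := by
    rcases P12 with ⟨v, hv⟩ | ⟨v, hv⟩ | ⟨v, hv⟩
    · exact cornerR hG h₁ h₂ hX hY hXne hdisj hv
    · exact Or.inl ⟨v, by rw [hX]; exact hv.1, hv.2⟩
    · exact Or.inr ⟨v, by rw [hY]; exact hv.1, hv.2⟩
  have R11 : (X ∩ (C₁ \ C₂)).Nonempty ∨ (Y ∩ (A₁ \ A₂)).Nonempty := by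
    rcases P11 with ⟨v, hv⟩ | ⟨v, hv⟩ | ⟨v, hv⟩
    · exact cornerR hG h₁ h₂.symm hX hY' hXne hdisj hv
    · exact Or.inl ⟨v, by rw [hX]; exact hv.1, hv.2⟩
    · exact Or.inr ⟨v, by rw [hY]; exact ⟨hv.1.2, hv.1.1⟩, hv.2⟩
  have R21 : (X ∩ (C₁ \ C₂)).Nonempty ∨ (Y ∩ (A₂ \ A₁)).Nonempty := by
    rcases P21 with ⟨v, hv⟩ | ⟨v, hv⟩ | ⟨v, hv⟩
    · exact cornerR hG h₁.symm h₂.symm hX' hY' hXne hdisj hv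
    · exact Or.inl ⟨v, by rw [hX]; exact ⟨hv.1.2, hv.1.1⟩, hv.2⟩
    · exact Or.inr ⟨v, by rw [hY]; exact ⟨hv.1.2, hv.1.1⟩, hv.2⟩
  have R22 : (X ∩ (C₂ \ C₁)).Nonempty ∨ (Y ∩ (A₂ \ A₁)).Nonempty := by
    rcases P22 with ⟨v, hv⟩ | ⟨v, hv⟩ | ⟨v, hv⟩
    · exact cornerR hG h₁.symm h₂ hX' hY hXne hdisj hv
    · exact Or.inl ⟨v, by rw [hX]; exact ⟨hv.1.2, hv.1.1⟩, hv.2⟩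
    · exact Or.inr ⟨v, by rw [hY]; exact hv.1, hv.2⟩
  refine Or.inr ⟨Set.disjoint_left.mpr (fun {a} ha hb => hdisj a ha hb), ?_⟩
  have hmain : ((X ∩ (C₁ \ C₂)).Nonempty ∧ (X ∩ (C₂ \ C₁)).Nonempty) ∨
      ((Y ∩ (A₁ \ A₂)).Nonempty ∧ (Y ∩ (A₂ \ A₁)).Nonempty) := by tauto
  rcases hmain with ⟨⟨x, hx⟩, ⟨x', hx'⟩⟩ | ⟨⟨y, hy⟩, ⟨y', hy'⟩⟩
  · have hne : x ≠ x' := fun h => hx.2.2 (h ▸ hx'.2.1)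
    obtain ⟨W, hW⟩ := ht₁ x hx.1 x' hx'.1 hne
    have hclass : ∀ m ∈ X, m ∈ C₁ \ C₂ ∨ m ∈ C₂ \ C₁ := by
      intro m hm
      rcases mem_union_sides h₂ m with h | h
      · exact Or.inl ⟨h, fun h2 => hdisj m hm (by rw [hY]; exact ⟨h, h2⟩)⟩
      · exact Or.inr ⟨h, fun h1 => hdisj m hm (by rw [hY]; exact ⟨h1, h⟩)⟩
    obtain ⟨u, v, P₀, hP₀, hu, hv⟩ := seg hW.1 hclass hx.2 hx'.2
      (fun m h1 h2 => h1.2 h2.1)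
    exact (altFromPath h₂ hY hP₀.1 hu hv hdisj).1
  · have hne : y ≠ y' := fun h => hy.2.2 (h ▸ hy'.2.1)
    obtain ⟨W, hW⟩ := ht₂ y hy.1 y' hy'.1 hne
    have hclass : ∀ m ∈ Y, m ∈ A₁ \ A₂ ∨ m ∈ A₂ \ A₁ := by
      intro m hm
      rcases mem_union_sides h₁ m with h | h
      · exact Or.inl ⟨h, fun h2 => hdisj' m hm (by rw [hX]; exact ⟨h, h2⟩)⟩
      · exact Or.inr ⟨h, fun h1 => hdisj' m hm (by rw [hX]; exact ⟨h1, h⟩)⟩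
    obtain ⟨u, v, P₀, hP₀, hu, hv⟩ := seg hW.1 hclass hy.2 hy'.2
      (fun m h1 h2 => h1.2 h2.1)
    exact (altFromPath h₁ hX hP₀.1 hu hv hdisj').2

lemma crosses_nonempty (hG : G.Connected) {A₁ A₂ C₁ C₂ : Set V} (h₁ : IsSep G A₁ A₂)
    (hcr : Crosses (A₁, A₂) (C₁, C₂)) : (A₁ ∩ A₂).Nonempty := by
  by_contra h
  have hdis : ∀ z, z ∈ A₁ → z ∈ A₂ → False := fun z h1 h2 => h ⟨z, h1, h2⟩
  by_cases hA₁ : A₁.Nonempty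
  · by_cases hA₂ : A₂.Nonempty
    · obtain ⟨a, ha⟩ := hA₁
      obtain ⟨b, hb⟩ := hA₂
      obtain ⟨W⟩ := hG.preconnected a b
      have hRT : ∀ x ∈ A₁, ∀ y, G.Adj x y → y ∈ A₁ ∨ y ∈ (∅ : Set V) := by
        intro x hx y hadj
        rcases mem_union_sides h₁ y with hy | hy
        · exact Or.inl hy
        · exact absurd hadj (h₁.2 x ⟨hx, fun h2 => hdis x hx h2⟩
            y ⟨hy, fun h1 => hdis y h1 hy⟩)
      obtain ⟨_, w, _, hw, _⟩ := escape_aux hRT W ha (fun h' => hdis b h' hb)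
      exact hw
    · have hA₂e : A₂ = ∅ := Set.not_nonempty_iff_eq_empty.mp hA₂
      have hA₁u : A₁ = Set.univ := by
        rw [← h₁.1, hA₂e, Set.union_empty]
      exact hcr (Or.inr (Or.inr (Or.inl ⟨by simp [hA₂e], by simp [hA₁u]⟩)))
  · have hA₁e : A₁ = ∅ := Set.not_nonempty_iff_eq_empty.mp hA₁
    have hA₂u : A₂ = Set.univ := by
      rw [← h₁.1, hA₁e, Set.empty_union]
    exact hcr (Or.inl ⟨by simp [hA₁e], by simp [hA₂u]⟩)

end Statement16Aux

/-- For separations `s`, `t` of a connected graph `G` with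
`r`-tomic separators (cycle space generated by cycles of length `≤ r`):
`s` and `t` cross if and only if `s_r` and `t_r` cross. -/
theorem statement16 {V : Type*} (G : SimpleGraph V) (r : ℕ) (hG : G.Connected)
    (hgen : CycleSpaceGenShort G r)
    (A₁ A₂ C₁ C₂ : Set V)
    (h₁ : IsSep G A₁ A₂) (h₂ : IsSep G C₁ C₂)
    (X Y : Set V) (E₁ E₂ F₁ F₂ : Set (Sym2 V))
    (hX : X = A₁ ∩ A₂) (hY : Y = C₁ ∩ C₂)
    (ht₁ : Rtomic G r X) (ht₂ : Rtomic G r Y)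
    (hE₁ : E₁ = edgesBetween G (A₁ \ X) X) (hE₂ : E₂ = edgesBetween G (A₂ \ X) X)
    (hF₁ : F₁ = edgesBetween G (C₁ \ Y) Y) (hF₂ : F₂ = edgesBetween G (C₂ \ Y) Y) :
    Crosses (A₁, A₂) (C₁, C₂) ↔ LocalCrosses G r E₁ X E₂ F₁ Y F₂ := by
  subst hE₁ hE₂ hF₁ hF₂
  have hX' : X = A₂ ∩ A₁ := by rw [hX, Set.inter_comm]
  have hY' : Y = C₂ ∩ C₁ := by rw [hY, Set.inter_comm]
  constructor
  · intro hcr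
    have hn1 : ¬ SepGE (A₁, A₂) (C₁, C₂) := fun h => hcr (Or.inl h)
    have hn2 : ¬ SepGE (A₁, A₂) (C₂, C₁) := fun h => hcr (Or.inr (Or.inl h))
    have hn3 : ¬ SepGE (A₂, A₁) (C₁, C₂) := fun h => hcr (Or.inr (Or.inr (Or.inl h)))
    have hn4 : ¬ SepGE (A₂, A₁) (C₂, C₁) := fun h => hcr (Or.inr (Or.inr (Or.inr h)))
    have hXne : X.Nonempty := by rw [hX]; exact crosses_nonempty hG h₁ hcr
    have hu₁ : A₁ ∪ A₂ = Set.univ := h₁.1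
    have hu₁' : A₂ ∪ A₁ = Set.univ := h₁.symm.1
    have hu₂ : C₁ ∪ C₂ = Set.univ := h₂.1
    have hu₂' : C₂ ∪ C₁ = Set.univ := h₂.symm.1
    have Q12 : Pprop A₁ A₂ C₁ C₂ := pOf hu₁ hu₂ hn1
    have Q11 : Pprop A₁ A₂ C₂ C₁ := pOf hu₁ hu₂' hn2
    have Q22 : Pprop A₂ A₁ C₁ C₂ := pOf hu₁' hu₂ hn3
    have Q21 : Pprop A₂ A₁ C₂ C₁ := pOf hu₁' hu₂' hn4
    refine ⟨rcoupled hG h₁ h₂ hX hY ht₁ ht₂ hXne Q12 Q11 Q21 Q22, ?_⟩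
    intro i j
    cases i <;> cases j
    · simpa using masterQ hG h₁.symm h₂ hX' hY ht₁ ht₂ hXne Q22 Q21 Q11 Q12
    · simpa using masterQ hG h₁.symm h₂.symm hX' hY' ht₁ ht₂ hXne Q21 Q22 Q12 Q11
    · simpa using masterQ hG h₁ h₂ hX hY ht₁ ht₂ hXne Q12 Q11 Q21 Q22
    · simpa using masterQ hG h₁ h₂.symm hX hY' ht₁ ht₂ hXne Q11 Q12 Q22 Q21
  · intro hlc hN
    rcases hN with h | h | h | h
    · exact nested_kill h₁ h₂ hX hY h.1 h.2 (by simpa using hlc.2 true false)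
    · exact nested_kill h₁ h₂.symm hX hY' h.1 h.2 (by simpa using hlc.2 true true)
    · exact nested_kill h₁.symm h₂ hX' hY h.1 h.2 (by simpa using hlc.2 false false)
    · exact nested_kill h₁.symm h₂.symm hX' hY' h.1 h.2 (by simpa using hlc.2 false true)

end LS
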